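/- If d(x,y) = M for all x ≠ y in X (i.e. d/M is the discrete metric), then for all multisets a and c on X, d_E(a,c) = M·max(C(a_c), C(c_a)); in particular d_E generalises the bag distance. -/

import Mathlib

/-- `ρ` is a metric: zero iff equal, symmetric, triangle inequality. -/
def IsMetric {α : Type*} (ρ : α → α → ℝ) : Prop :=
  (∀ x y, ρ x y = 0 ↔ x = y) ∧ (∀ x y, ρ x y = ρ y x) ∧
    ∀ x y z, ρ x z ≤ ρ x y + ρ y z

def IsCauchyWith {α : Type*} (ρ : α → α → ℝ) (S : ℕ → α) : Prop :=
  ∀ ε : ℝ, 0 < ε → ∃ N : ℕ, ∀ m ≥ N, ∀ n ≥ N, ρ (S m) (S n) < ε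

def TendsToWith {α : Type*} (ρ : α → α → ℝ) (S : ℕ → α) (l : α) : Prop :=
  ∀ ε : ℝ, 0 < ε → ∃ N : ℕ, ∀ n ≥ N, ρ (S n) l < ε

def IsCompleteWith {α : Type*} (ρ : α → α → ℝ) : Prop :=
  ∀ S : ℕ → α, IsCauchyWith ρ S → ∃ l, TendsToWith ρ S l

/-- the topology generated by the open balls of `ρ` -/
def topOf {α : Type*} (ρ : α → α → ℝ) : TopologicalSpace α :=
  TopologicalSpace.generateFrom {s | ∃ (x : α) (ε : ℝ), s = {y | ρ x y < ε}}

/-- `sup d`, the supremum of all distances in `X` -/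
noncomputable def supD (X : Type*) [MetricSpace X] : ℝ :=
  sSup {r : ℝ | ∃ x y : X, dist x y = r}

/-- The multiset distance `d_E`: enumerate `a` and `c` with multiplicity in all possible
orders; the shorter enumeration is matched against an initial part of the other, taking
the sum of the distances of matched pairs plus the notional part `M * |C(c) - C(a)|`;
`d_E` is the least such value. -/
noncomputable def dE {X : Type*} [MetricSpace X] (M : ℝ) (a c : Multiset X) : ℝ :=
  sInf {r : ℝ | ∃ la lc : List X, (la : Multiset X) = a ∧ (lc : Multiset X) = c ∧
    r = (List.zipWith dist la lc).sum + M * |(c.card : ℝ) - (a.card : ℝ)|}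

/-- `d_Em`, the mean version of `d_E` (equal to `0` on the pair of empty multisets). -/
noncomputable def dEm {X : Type*} [MetricSpace X] (M : ℝ) (a c : Multiset X) : ℝ :=
  dE M a c / (max a.card c.card : ℕ)



section
variable {X : Type*} [MetricSpace X] [DecidableEq X]

lemma key_lb (M : ℝ) (hM : 0 < M)
    (hdisc : ∀ x y : X, x ≠ y → dist x y = M) :
    ∀ (l1 l2 : List X), M * (min l1.length l2.length : ℕ) ≤
      (List.zipWith dist l1 l2).sum + M * (((l1 : Multiset X)) ∩ (l2 : Multiset X)).card := by
  intro l1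
  induction l1 with
  | nil => intro l2; simp
  | cons x l1 ih =>
    intro l2
    cases l2 with
    | nil => simp
    | cons y l2 =>
      have hcoe1 : ((x :: l1 : List X) : Multiset X) = x ::ₘ (l1 : Multiset X) := rfl
      have hcoe2 : ((y :: l2 : List X) : Multiset X) = y ::ₘ (l2 : Multiset X) := rfl
      have hmin : min (x :: l1).length (y :: l2).length = min l1.length l2.length + 1 := by
        simp [Nat.succ_min_succ]
      have hih := ih l2
      by_cases hxy : x = y
      · subst hxy
        have h1 : ((x ::ₘ (l1 : Multiset X)) ∩ (x ::ₘ (l2 : Multiset X)))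
            = x ::ₘ ((l1 : Multiset X) ∩ (l2 : Multiset X)) := by
          ext z
          simp [Multiset.count_inter, Multiset.count_cons]
        simp only [hcoe1, hcoe2, h1, List.zipWith_cons_cons, List.sum_cons, dist_self, hmin,
          Multiset.card_cons]
        push_cast at hih ⊢
        linarith
      · have hle : ((l1 : Multiset X) ∩ (l2 : Multiset X)).card
            ≤ ((x ::ₘ (l1 : Multiset X)) ∩ (y ::ₘ (l2 : Multiset X))).card := by
          apply Multiset.card_le_card
          apply Multiset.le_iff_count.2
          intro z
          simp only [Multiset.count_inter, Multiset.count_cons]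
          split <;> split <;> omega
        have hle' : (((l1 : Multiset X) ∩ (l2 : Multiset X)).card : ℝ)
            ≤ (((x ::ₘ (l1 : Multiset X)) ∩ (y ::ₘ (l2 : Multiset X))).card : ℝ) := by
          exact_mod_cast hle
        simp only [hcoe1, hcoe2, List.zipWith_cons_cons, List.sum_cons, hmin, hdisc x y hxy]
        have hmul := mul_le_mul_of_nonneg_left hle' hM.le
        push_cast at hih ⊢
        linarith

lemma zip_sum_disj (M : ℝ) (hdisc : ∀ x y : X, x ≠ y → dist x y = M) :
    ∀ (l1 l2 : List X), (∀ x ∈ l1, ∀ y ∈ l2, x ≠ y) →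
      (List.zipWith dist l1 l2).sum = M * (min l1.length l2.length : ℕ) := by
  intro l1
  induction l1 with
  | nil => intro l2 _; simp
  | cons x l1 ih =>
    intro l2 h
    cases l2 with
    | nil => simp
    | cons y l2 =>
      have hxy : x ≠ y := h x (by simp) y (by simp)
      simp only [List.zipWith_cons_cons, List.sum_cons, hdisc x y hxy, List.length_cons,
        Nat.succ_min_succ]
      rw [ih l2 (fun a ha b hb => h a (by simp [ha]) b (by simp [hb]))]
      push_cast
      ring

lemma zip_self_sum (l : List X) : (List.zipWith dist l l).sum = 0 := by
  rw [List.zipWith_self]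
  simp

end

/-- If `d/M` is the discrete metric then `d_E` of `a`, `c` equals `M` times the larger
of the cardinalities of the multiset differences; so `d_E` generalises the bag distance. -/

theorem stmt_4 {X : Type*} [MetricSpace X] [Nontrivial X] [DecidableEq X] (M : ℝ) (hM : 0 < M)
    (hdisc : ∀ x y : X, x ≠ y → dist x y = M) (a c : Multiset X) :
    dE M a c = M * max ((a - a.inter c).card : ℝ) ((c - a.inter c).card : ℝ) := by
  classical
  have hia : a.inter c ≤ a := Multiset.inter_le_left (s := a) (t := c)
  have hic : a.inter c ≤ c := Multiset.inter_le_right (s := a) (t := c)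
  have hka : (a.inter c).card ≤ a.card := Multiset.card_le_card hia
  have hkc : (a.inter c).card ≤ c.card := Multiset.card_le_card hic
  have hcda : (a - a.inter c).card = a.card - (a.inter c).card := Multiset.card_sub hia
  have hcdc : (c - a.inter c).card = c.card - (a.inter c).card := Multiset.card_sub hic
  set k := (a.inter c).card with hk
  set A := a.card with hA
  set C := c.card with hC
  have htarget : M * max ((a - a.inter c).card : ℝ) ((c - a.inter c).card : ℝ)
      = M * (max (A : ℝ) (C : ℝ) - k) := by
    rw [hcda, hcdc]
    rcases le_total A C with h | h
    · rw [Nat.cast_sub hka, Nat.cast_sub hkc,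
        max_eq_right (show (A:ℝ) ≤ C by exact_mod_cast h),
        max_eq_right (sub_le_sub_right (show (A:ℝ) ≤ C by exact_mod_cast h) _)]
    · rw [Nat.cast_sub hka, Nat.cast_sub hkc,
        max_eq_left (show (C:ℝ) ≤ A by exact_mod_cast h),
        max_eq_left (sub_le_sub_right (show (C:ℝ) ≤ A by exact_mod_cast h) _)]
  rw [htarget]
  have hlb : ∀ r ∈ {r : ℝ | ∃ la lc : List X, (la : Multiset X) = a ∧ (lc : Multiset X) = c ∧
      r = (List.zipWith dist la lc).sum + M * |(c.card : ℝ) - (a.card : ℝ)|},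
      M * (max (A : ℝ) (C : ℝ) - k) ≤ r := by
    rintro r ⟨la, lc, h1, h2, rfl⟩
    have hla : la.length = A := by rw [hA, ← h1, Multiset.coe_card]
    have hlc : lc.length = C := by rw [hC, ← h2, Multiset.coe_card]
    have hkey := key_lb M hM hdisc la lc
    rw [h1, h2, hla, hlc] at hkey
    have hk2 : (((a : Multiset X) ∩ c).card : ℝ) = (k : ℝ) := rfl
    have hmincast : ((min A C : ℕ) : ℝ) = min (A : ℝ) (C : ℝ) := by
      rcases le_total A C with h | h
      · rw [min_eq_left h, min_eq_left (show (A:ℝ) ≤ C by exact_mod_cast h)]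
      · rw [min_eq_right h, min_eq_right (show (C:ℝ) ≤ A by exact_mod_cast h)]
    rw [hk2, hmincast] at hkey
    have habs : |(C : ℝ) - (A : ℝ)| = max (A : ℝ) C - min (A : ℝ) C := by
      rcases le_total (A : ℝ) (C : ℝ) with h | h
      · rw [abs_of_nonneg (by linarith), max_eq_right h, min_eq_left h]
      · rw [abs_of_nonpos (by linarith), neg_sub, max_eq_left h, min_eq_right h]
    rw [← hA, ← hC, habs, mul_sub, mul_sub]
    linarith
  have hmem : M * (max (A : ℝ) (C : ℝ) - k) ∈ {r : ℝ | ∃ la lc : List X,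
      (la : Multiset X) = a ∧ (lc : Multiset X) = c ∧
      r = (List.zipWith dist la lc).sum + M * |(c.card : ℝ) - (a.card : ℝ)|} := by
    refine ⟨(a.inter c).toList ++ (a - a.inter c).toList,
      (a.inter c).toList ++ (c - a.inter c).toList, ?_, ?_, ?_⟩
    · rw [← Multiset.coe_add]
      simp only [Multiset.coe_toList]
      exact add_tsub_cancel_of_le hia
    · rw [← Multiset.coe_add]
      simp only [Multiset.coe_toList]
      exact add_tsub_cancel_of_le hic
    · rw [List.zipWith_append rfl, List.sum_append, zip_self_sum]
      have hdisj : ∀ x ∈ (a - a.inter c).toList, ∀ y ∈ (c - a.inter c).toList, x ≠ y := by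
        intro x hx y hy hxy
        subst hxy
        rw [Multiset.mem_toList] at hx hy
        have h1 : 0 < (a - a.inter c).count x := Multiset.count_pos.2 hx
        have h2 : 0 < (c - a.inter c).count x := Multiset.count_pos.2 hy
        rw [Multiset.count_sub] at h1 h2
        have h3 : (a.inter c).count x = min (a.count x) (c.count x) := Multiset.count_inter x a c
        omega
      rw [zip_sum_disj M hdisc _ _ hdisj]
      simp only [Multiset.length_toList, hcda, hcdc, ← hA, ← hC]
      rcases le_total A C with h | h
      · have h1 : min (A - k) (C - k) = A - k := min_eq_left (by omega)
        rw [h1, Nat.cast_sub hka,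
          abs_of_nonneg (sub_nonneg.2 (show (A:ℝ) ≤ C by exact_mod_cast h)),
          max_eq_right (show (A:ℝ) ≤ C by exact_mod_cast h)]
        ring
      · have h1 : min (A - k) (C - k) = C - k := min_eq_right (by omega)
        rw [h1, Nat.cast_sub hkc,
          abs_of_nonpos (sub_nonpos.2 (show (C:ℝ) ≤ A by exact_mod_cast h)),
          max_eq_left (show (C:ℝ) ≤ A by exact_mod_cast h)]
        ring
  unfold dE
  exact le_antisymm (csInf_le ⟨_, hlb⟩ hmem) (le_csInf ⟨_, hmem⟩ hlb)
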